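/- arXiv:2310.18554 — 4 statements merged into one kernel-verified Lean document; each statement's English description precedes it below -/
import Mathlib

section
/- For the logistic loss, the following identity holds for any θ ∈ ℝ^d: ℓ_s(θ⋆) = ℓ_s(θ) + ξ_s ⟨x_s, θ − θ⋆⟩ − KL( μ(⟨x_s, θ⋆⟩), μ(⟨x_s, θ⟩) ), where ξ_s = r_s − μ(⟨x_s, θ⋆⟩) and KL(p, q) = p log(p/q) + (1−p) log((1−p)/(1−q)) is the KL divergence between Bernoulli(p) and Bernoulli(q). -/
open scoped RealInnerProductSpace

/-- The logistic (sigmoid) function `μ(z) = 1/(1+e^{-z})`. -/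
noncomputable def logistic (z : ℝ) : ℝ := 1 / (1 + Real.exp (-z))

/-- The logistic loss `ℓ(θ) = -r log μ(⟨x,θ⟩) - (1-r) log(1-μ(⟨x,θ⟩))`. -/
noncomputable def logLoss {d : ℕ} (x : EuclideanSpace ℝ (Fin d)) (r : ℝ)
    (θ : EuclideanSpace ℝ (Fin d)) : ℝ :=
  -(r * Real.log (logistic ⟪x, θ⟫)) - (1 - r) * Real.log (1 - logistic ⟪x, θ⟫)

/-- KL divergence between `Bernoulli(p)` and `Bernoulli(q)`. -/
noncomputable def klBer (p q : ℝ) : ℝ :=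
  p * Real.log (p / q) + (1 - p) * Real.log ((1 - p) / (1 - q))

lemma denom_pos (z : ℝ) : 0 < 1 + Real.exp (-z) := by positivity

lemma logistic_pos (z : ℝ) : 0 < logistic z := by
  unfold logistic; positivity

lemma one_sub_logistic (z : ℝ) : 1 - logistic z = Real.exp (-z) / (1 + Real.exp (-z)) := by
  unfold logistic
  field_simp
  ring

lemma one_sub_logistic_pos (z : ℝ) : 0 < 1 - logistic z := by
  rw [one_sub_logistic]; positivity

lemma log_logistic (z : ℝ) : Real.log (logistic z) = -Real.log (1 + Real.exp (-z)) := by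
  unfold logistic
  rw [Real.log_div one_ne_zero (denom_pos z).ne', Real.log_one, zero_sub]

lemma log_one_sub_logistic (z : ℝ) :
    Real.log (1 - logistic z) = -z - Real.log (1 + Real.exp (-z)) := by
  rw [one_sub_logistic, Real.log_div (Real.exp_pos _).ne' (denom_pos z).ne',
    Real.log_exp]

lemma key (a b r : ℝ) :
    -(r * Real.log (logistic a)) - (1 - r) * Real.log (1 - logistic a) =
      (-(r * Real.log (logistic b)) - (1 - r) * Real.log (1 - logistic b))
        + (r - logistic a) * (b - a)
        - klBer (logistic a) (logistic b) := by
  unfold klBer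
  rw [Real.log_div (logistic_pos a).ne' (logistic_pos b).ne',
    Real.log_div (one_sub_logistic_pos a).ne' (one_sub_logistic_pos b).ne',
    log_logistic, log_logistic, log_one_sub_logistic, log_one_sub_logistic]
  have hA : logistic a * (1 + Real.exp (-a)) = 1 := by
    unfold logistic; field_simp
  nlinarith [hA, Real.exp_pos (-a)]

/-- decomposition of the logistic loss at the true parameter. -/
theorem stmt_2 {d : ℕ} (x θstar θ : EuclideanSpace ℝ (Fin d)) (r : ℝ)
    (hr : r = 0 ∨ r = 1) :
    logLoss x r θstar =
      logLoss x r θ + (r - logistic ⟪x, θstar⟫) * ⟪x, θ - θstar⟫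
        - klBer (logistic ⟪x, θstar⟫) (logistic ⟪x, θ⟫) := by
  rw [inner_sub_right]
  exact key ⟪x, θstar⟫ ⟪x, θ⟫ r
end

section
/- Let x_1, …, x_T ∈ ℝ^d with ‖x_t‖₂ ≤ 1 for all t, let λ > 0, and let V_t = λ I_d + Σ_{s=1}^{t−1} x_s x_sᵀ. Define H_T = { t ∈ [T] : ‖x_t‖²_{V_t^{−1}} > 1 }, where ‖v‖²_M = vᵀ M v. Then |H_T| ≤ (2d / log 2) · log( 1 + 1/(λ log 2) ). -/
/-- The quadratic form `vᵀ M v` associated with a square matrix `M`. -/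
noncomputable def quadForm {n : Type*} [Fintype n] (M : Matrix n n ℝ) (v : n → ℝ) : ℝ :=
  ∑ i, ∑ j, v i * M i j * v j

open Matrix

-- outer product PSD
lemma aux_outer_psd {d : ℕ} (u : Fin d → ℝ) :
    (Matrix.of fun i j => u i * u j).PosSemidef := by
  refine Matrix.posSemidef_iff_dotProduct_mulVec.mpr ⟨?_, ?_⟩
  · ext i j
    simp [Matrix.conjTranspose_apply, mul_comm]
  · intro y
    have : star y ⬝ᵥ ((Matrix.of fun i j => u i * u j) *ᵥ y) = (∑ i, u i * y i) ^ 2 := by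
      simp only [star_trivial, dotProduct, Matrix.mulVec, Matrix.of_apply]
      calc ∑ i, y i * ∑ j, u i * u j * y j
          = ∑ i, (u i * y i) * ∑ j, u j * y j := Finset.sum_congr rfl fun i _ => by
            rw [Finset.mul_sum, Finset.mul_sum]
            exact Finset.sum_congr rfl fun j _ => by ring
        _ = (∑ i, u i * y i) ^ 2 := by rw [← Finset.sum_mul, sq]
    rw [this]
    positivity

lemma aux_smul_one_posdef {d : ℕ} {lam : ℝ} (hlam : 0 < lam) :
    (lam • (1 : Matrix (Fin d) (Fin d) ℝ)).PosDef := by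
  rw [Matrix.smul_one_eq_diagonal]
  exact Matrix.PosDef.diagonal (fun _ => hlam)

lemma aux_sum_psd {d : ℕ} {ι : Type*} (s : Finset ι) (M : ι → Matrix (Fin d) (Fin d) ℝ)
    (h : ∀ i ∈ s, (M i).PosSemidef) : (∑ i ∈ s, M i).PosSemidef := by
  classical
  induction s using Finset.induction with
  | empty => simpa using Matrix.PosSemidef.zero
  | insert _ _ hns ih =>
    rw [Finset.sum_insert hns]
    exact ((h _ (Finset.mem_insert_self _ _)).add
      (ih fun i hi => h i (Finset.mem_insert_of_mem hi)))

lemma aux_quadForm_eq {n : Type*} [Fintype n] (M : Matrix n n ℝ) (v : n → ℝ) :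
    quadForm M v = v ⬝ᵥ M *ᵥ v := by
  simp only [quadForm, dotProduct, Matrix.mulVec, Finset.mul_sum]
  exact Finset.sum_congr rfl fun i _ => Finset.sum_congr rfl fun j _ => by ring

-- symmetric matrix moves across dot product
lemma aux_dot_symm {d : ℕ} {M : Matrix (Fin d) (Fin d) ℝ} (hM : M.IsHermitian)
    (a b : Fin d → ℝ) : (M *ᵥ a) ⬝ᵥ b = a ⬝ᵥ (M *ᵥ b) := by
  rw [dotProduct_comm, dotProduct_mulVec, ← Matrix.mulVec_transpose]
  have : Mᵀ = M := by
    have := hM; rwa [Matrix.IsHermitian, conjTranspose_eq_transpose_of_trivial] at this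
  rw [this, dotProduct_comm]

-- the key monotonicity: W ≤ V as quadratic forms implies reversed order for inverses
lemma aux_inv_quad_mono {d : ℕ} {W V : Matrix (Fin d) (Fin d) ℝ}
    (hW : W.PosDef) (hV : V.PosDef)
    (hle : ∀ v, v ⬝ᵥ W *ᵥ v ≤ v ⬝ᵥ V *ᵥ v) (z : Fin d → ℝ) :
    z ⬝ᵥ V⁻¹ *ᵥ z ≤ z ⬝ᵥ W⁻¹ *ᵥ z := by
  classical
  set v := V⁻¹ *ᵥ z with hv
  set u := W⁻¹ *ᵥ z with hu
  have hWinv : W * W⁻¹ = 1 := Matrix.mul_nonsing_inv _ hW.det_pos.ne'.isUnit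
  have hVinv : V * V⁻¹ = 1 := Matrix.mul_nonsing_inv _ hV.det_pos.ne'.isUnit
  have hWu : W *ᵥ u = z := by rw [hu, Matrix.mulVec_mulVec, hWinv, Matrix.one_mulVec]
  have hVv : V *ᵥ v = z := by rw [hv, Matrix.mulVec_mulVec, hVinv, Matrix.one_mulVec]
  -- 0 ≤ (v-u) ⬝ W (v-u)
  have h0 : 0 ≤ (v - u) ⬝ᵥ W *ᵥ (v - u) := by
    have := hW.posSemidef.dotProduct_mulVec_nonneg (v - u); simpa using this
  have hexp : (v - u) ⬝ᵥ W *ᵥ (v - u)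
      = v ⬝ᵥ W *ᵥ v - 2 * (v ⬝ᵥ z) + u ⬝ᵥ z := by
    have h1 : u ⬝ᵥ W *ᵥ v = v ⬝ᵥ z := by
      rw [← aux_dot_symm hW.isHermitian u v, hWu, dotProduct_comm]
    have h2 : v ⬝ᵥ W *ᵥ u = v ⬝ᵥ z := by rw [hWu]
    have h3 : u ⬝ᵥ W *ᵥ u = u ⬝ᵥ z := by rw [hWu]
    rw [Matrix.mulVec_sub, dotProduct_sub, sub_dotProduct, sub_dotProduct,
      h1, h2, h3]
    ring
  have hvz : v ⬝ᵥ z = v ⬝ᵥ V *ᵥ v := by rw [hVv]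
  -- combine
  have : v ⬝ᵥ V *ᵥ v ≤ u ⬝ᵥ z := by nlinarith [hle v]
  calc z ⬝ᵥ V⁻¹ *ᵥ z = v ⬝ᵥ z := dotProduct_comm _ _
    _ = v ⬝ᵥ V *ᵥ v := hvz
    _ ≤ u ⬝ᵥ z := this
    _ = z ⬝ᵥ W⁻¹ *ᵥ z := dotProduct_comm _ _

lemma aux_det_add_outer {d : ℕ} {W : Matrix (Fin d) (Fin d) ℝ} (hW : W.PosDef)
    (u : Fin d → ℝ) :
    (W + Matrix.of fun i j => u i * u j).det
      = W.det * (1 + u ⬝ᵥ W⁻¹ *ᵥ u) := by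
  classical
  have houter : (Matrix.of fun i j => u i * u j)
      = Matrix.replicateCol Unit u * Matrix.replicateRow Unit u := by
    ext i j
    simp [Matrix.mul_apply, Matrix.replicateCol, Matrix.replicateRow]
  rw [houter, Matrix.det_add_replicateCol_mul_replicateRow hW.det_pos.ne'.isUnit]
  congr 1
  rw [Matrix.det_unique]
  rw [Matrix.add_apply, Matrix.one_apply_eq]
  congr 1
  simp only [Matrix.mul_apply, Matrix.replicateRow_apply, Matrix.replicateCol_apply, dotProduct,
    Matrix.mulVec, Finset.sum_mul, Finset.mul_sum]
  rw [Finset.sum_comm]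
  exact Finset.sum_congr rfl fun i _ => Finset.sum_congr rfl fun j _ => by ring

lemma aux_trace_eq_sum_eigenvalues {d : ℕ} {A : Matrix (Fin d) (Fin d) ℝ}
    (hA : A.IsHermitian) : A.trace = ∑ i, hA.eigenvalues i := by
  classical
  simpa using hA.trace_eq_sum_eigenvalues

lemma aux_det_le_trace_pow {d : ℕ} (hd : 0 < d) {A : Matrix (Fin d) (Fin d) ℝ}
    (hA : A.PosSemidef) : A.det ≤ (A.trace / d) ^ d := by
  classical
  have hherm := hA.isHermitian
  have hev : ∀ i, 0 ≤ hherm.eigenvalues i := hA.eigenvalues_nonneg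
  have hdet : A.det = ∏ i, hherm.eigenvalues i := by
    have := hherm.det_eq_prod_eigenvalues
    simpa using this
  have htr : A.trace = ∑ i, hherm.eigenvalues i := aux_trace_eq_sum_eigenvalues hherm
  have hdR : (0:ℝ) < d := Nat.cast_pos.mpr hd
  -- AM-GM
  have hamgm := Real.geom_mean_le_arith_mean_weighted Finset.univ
    (fun _ : Fin d => 1 / d) hherm.eigenvalues
    (fun i _ => by positivity)
    (by simp [Finset.card_univ]; field_simp)
    (fun i _ => hev i)
  have hsum : ∑ i, (1 / (d:ℝ)) * hherm.eigenvalues i = A.trace / d := by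
    rw [htr, ← Finset.mul_sum]
    ring
  have hprod : (∏ i, hherm.eigenvalues i ^ (1 / (d:ℝ))) ^ d = ∏ i, hherm.eigenvalues i := by
    rw [← Finset.prod_pow]
    exact Finset.prod_congr rfl fun i _ => by
      rw [← Real.rpow_natCast (hherm.eigenvalues i ^ (1/(d:ℝ))) d,
        ← Real.rpow_mul (hev i)]
      rw [one_div, inv_mul_cancel₀ hdR.ne', Real.rpow_one]
  have h1 : (0:ℝ) ≤ ∏ i, hherm.eigenvalues i ^ (1 / (d:ℝ)) :=
    Finset.prod_nonneg fun i _ => Real.rpow_nonneg (hev i) _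
  calc A.det = (∏ i, hherm.eigenvalues i ^ (1 / (d:ℝ))) ^ d := by rw [hprod, hdet]
    _ ≤ (A.trace / d) ^ d := by
        apply pow_le_pow_left₀ h1
        rw [← hsum]
        exact hamgm
lemma aux_scalar {d m : ℕ} {lam : ℝ} (hd : 0 < d) (hlam : 0 < lam)
    (h : (m:ℝ) * Real.log 2 ≤ d * Real.log (1 + m / (d * lam))) :
    (m:ℝ) ≤ (2 * d / Real.log 2) * Real.log (1 + 1 / (lam * Real.log 2)) := by
  have hlog2 : 0 < Real.log 2 := Real.log_pos one_lt_two
  set c : ℝ := 1 / (lam * Real.log 2) with hcdef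
  have hc : 0 < c := by positivity
  set L : ℝ := Real.log (1 + c) with hLdef
  have hL : 0 < L := Real.log_pos (by linarith)
  set B : ℝ := 2 * d / Real.log 2 * L with hBdef
  have hdR : (0:ℝ) < d := Nat.cast_pos.mpr hd
  have hB : 0 < B := by positivity
  by_contra hcon
  push_neg at hcon
  have hm : (0:ℝ) < m := hB.trans hcon
  have hp : 1 ≤ (m:ℝ) / B := (one_le_div hB).mpr hcon.le
  set s : ℝ := B / (d * lam) with hsdef
  have hs : (0:ℝ) ≤ s := by positivity
  have hber := one_add_mul_self_le_rpow_one_add (by linarith : (-1:ℝ) ≤ s) hp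
  have hms : ((m:ℝ)/B) * s = m / (d*lam) := by
    rw [hsdef]
    field_simp
  have hlogber : Real.log (1 + m/(d*lam)) ≤ ((m:ℝ)/B) * Real.log (1+s) := by
    have h1pos : (0:ℝ) < 1 + ((m:ℝ)/B) * s := by
      have : 0 ≤ ((m:ℝ)/B) * s := by positivity
      linarith
    calc Real.log (1 + (m:ℝ)/(d*lam)) = Real.log (1 + ((m:ℝ)/B)*s) := by rw [hms]
      _ ≤ Real.log ((1+s)^((m:ℝ)/B)) := Real.log_le_log h1pos hber
      _ = ((m:ℝ)/B) * Real.log (1+s) := Real.log_rpow (by linarith) _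
  have hseq : s = 2 * c * L := by
    rw [hsdef, hBdef, hcdef]
    field_simp
  have hkey : Real.log (1 + 2*c*L) < 2 * L := by
    have h1 : Real.log (Real.sqrt (1+c)) = Real.log (1+c) / 2 := Real.log_sqrt (by linarith)
    have h2 : Real.log (Real.sqrt (1+c)) ≤ Real.sqrt (1+c) - 1 :=
      Real.log_le_sub_one_of_pos (Real.sqrt_pos.mpr (by linarith))
    rw [← hLdef] at h1
    have hs2 : Real.sqrt (1+c) ^ 2 = 1 + c := Real.sq_sqrt (by linarith)
    have hsnn : 0 ≤ Real.sqrt (1+c) := Real.sqrt_nonneg _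
    have hLlt : L < 1 + c/2 := by nlinarith [sq_nonneg (Real.sqrt (1+c) - 2)]
    have harg : 1 + 2*c*L < (1+c)^2 := by nlinarith
    calc Real.log (1 + 2*c*L) < Real.log ((1+c)^2) :=
          Real.log_lt_log (by positivity) harg
      _ = 2 * L := by rw [Real.log_pow]; norm_num; rfl
  have hfinal : (d:ℝ) * (((m:ℝ)/B) * (2*L)) = m * Real.log 2 := by
    rw [hBdef]
    field_simp
  have hchain : (m:ℝ) * Real.log 2 < m * Real.log 2 := by
    calc (m:ℝ) * Real.log 2 ≤ d * Real.log (1 + m / (d * lam)) := h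
      _ ≤ d * (((m:ℝ)/B) * Real.log (1+s)) := by
          apply mul_le_mul_of_nonneg_left hlogber hdR.le
      _ = d * (((m:ℝ)/B) * Real.log (1+2*c*L)) := by rw [hseq]
      _ < d * (((m:ℝ)/B) * (2*L)) := by
          apply mul_lt_mul_of_pos_left _ hdR
          apply mul_lt_mul_of_pos_left hkey
          positivity
      _ = m * Real.log 2 := hfinal
  exact absurd hchain (lt_irrefl _)

lemma aux_log_step {d m : ℕ} {lam : ℝ} (hd : 0 < d) (hlam : 0 < lam)
    (h : (2:ℝ)^m * lam^d ≤ ((d*lam + m)/d)^d) :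
    (m:ℝ) * Real.log 2 ≤ d * Real.log (1 + m / (d * lam)) := by
  have hdR : (0:ℝ) < d := Nat.cast_pos.mpr hd
  have hl : (0:ℝ) < 2^m * lam^d := by positivity
  have hlog := Real.log_le_log hl h
  rw [Real.log_mul (by positivity) (by positivity), Real.log_pow, Real.log_pow, Real.log_pow] at hlog
  have h1 : Real.log ((d*lam + m)/d) = Real.log (d*lam + m) - Real.log d :=
    Real.log_div (by positivity) hdR.ne'
  have h2 : Real.log (1 + (m:ℝ)/(d*lam)) = Real.log (d*lam + m) - Real.log (d*lam) := by
    rw [show (1:ℝ) + (m:ℝ)/(d*lam) = (d*lam + m)/(d*lam) by field_simp]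
    exact Real.log_div (by positivity) (by positivity)
  have h3 : Real.log ((d:ℝ)*lam) = Real.log d + Real.log lam :=
    Real.log_mul hdR.ne' hlam.ne'
  have hlog2 : Real.log (2:ℝ) = Real.log 2 := rfl
  nlinarith [hlog, h1, h2, h3]

lemma aux_dot_sum_mulVec {d : ℕ} (F : Finset ℕ) (M : ℕ → Matrix (Fin d) (Fin d) ℝ)
    (v : Fin d → ℝ) :
    v ⬝ᵥ (∑ s ∈ F, M s) *ᵥ v = ∑ s ∈ F, v ⬝ᵥ (M s) *ᵥ v := by
  classical
  induction F using Finset.induction with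
  | empty => simp [Matrix.zero_mulVec]
  | insert _ _ hns ih =>
    rw [Finset.sum_insert hns, Finset.sum_insert hns, Matrix.add_mulVec, dotProduct_add, ih]

/-- elliptical potential count lemma.  For a sequence of unit-norm-bounded vectors
`x_1, …, x_T` and `V_t = λ I + Σ_{s=1}^{t-1} x_s x_sᵀ`, the number of rounds `t ∈ [T]` with
`‖x_t‖²_{V_t⁻¹} > 1` is at most `(2d/log 2) · log(1 + 1/(λ log 2))`. -/
theorem stmt_7 (d T : ℕ) (x : ℕ → EuclideanSpace ℝ (Fin d)) (hx : ∀ t, ‖x t‖ ≤ 1)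
    (lam : ℝ) (hlam : 0 < lam)
    (V : ℕ → Matrix (Fin d) (Fin d) ℝ)
    (hV : ∀ t, V t = lam • (1 : Matrix (Fin d) (Fin d) ℝ)
      + ∑ s ∈ Finset.Ico 1 t, Matrix.of (fun i j => x s i * x s j)) :
    (((Finset.Icc 1 T).filter (fun t => 1 < quadForm ((V t)⁻¹) (fun i => x t i))).card : ℝ)
      ≤ (2 * d / Real.log 2) * Real.log (1 + 1 / (lam * Real.log 2)) := by
  classical
  rcases Nat.eq_zero_or_pos d with hd | hd'
  · subst hd
    have hempty : (Finset.Icc 1 T).filter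
        (fun t => 1 < quadForm ((V t)⁻¹) (fun i => x t i)) = ∅ := by
      apply Finset.filter_false_of_mem
      intro t _
      simp [quadForm]
    rw [hempty]
    simp
  -- main case
  set S := (Finset.Icc 1 T).filter
    (fun t => 1 < quadForm ((V t)⁻¹) (fun i => x t i)) with hS
  set m := S.card with hm
  set O : ℕ → Matrix (Fin d) (Fin d) ℝ :=
    fun s => Matrix.of (fun i j => x s i * x s j) with hO
  set W : ℕ → Matrix (Fin d) (Fin d) ℝ :=
    fun t => lam • 1 + ∑ s ∈ S.filter (· < t), O s with hWdef
  have hOpsd : ∀ s, (O s).PosSemidef := fun s => aux_outer_psd _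
  have hsumpsd : ∀ (F : Finset ℕ), (∑ s ∈ F, O s).PosSemidef :=
    fun F => aux_sum_psd F O (fun _ _ => hOpsd _)
  have hWpd : ∀ t, (W t).PosDef :=
    fun t => (aux_smul_one_posdef hlam).add_posSemidef (hsumpsd _)
  have hVpd : ∀ t, (V t).PosDef := fun t => by
    rw [hV t]
    exact (aux_smul_one_posdef hlam).add_posSemidef
      (aux_sum_psd _ _ fun s _ => aux_outer_psd _)
  -- quadratic form comparison W t ≤ V t
  have hquad : ∀ t (v : Fin d → ℝ), v ⬝ᵥ (W t) *ᵥ v ≤ v ⬝ᵥ (V t) *ᵥ v := by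
    intro t v
    have hsub : S.filter (· < t) ⊆ Finset.Ico 1 t := by
      intro s hs
      rw [Finset.mem_filter] at hs
      have h1 : s ∈ Finset.Icc 1 T := (Finset.mem_filter.mp hs.1).1
      rw [Finset.mem_Icc] at h1
      rw [Finset.mem_Ico]
      exact ⟨h1.1, hs.2⟩
    rw [hV t]
    simp only [hWdef, Matrix.add_mulVec, dotProduct_add]
    gcongr
    rw [aux_dot_sum_mulVec, aux_dot_sum_mulVec]
    apply Finset.sum_le_sum_of_subset_of_nonneg hsub
    intro s _ _
    simpa using (hOpsd s).dotProduct_mulVec_nonneg v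
  -- points in S have large quadratic form wrt W
  have hgt : ∀ t ∈ S, 1 < x t ⬝ᵥ (W t)⁻¹ *ᵥ x t := by
    intro t ht
    have hPt : 1 < quadForm ((V t)⁻¹) (fun i => x t i) := (Finset.mem_filter.mp ht).2
    rw [aux_quadForm_eq] at hPt
    exact lt_of_lt_of_le hPt (aux_inv_quad_mono (hWpd t) (hVpd t) (hquad t) _)
  -- determinant lower bound by induction
  have hdetlb : ∀ t, (2:ℝ)^((S.filter (· < t)).card) * lam^d ≤ (W t).det := by
    intro t
    induction t with
    | zero =>
      have h0 : S.filter (· < 0) = ∅ := by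
        apply Finset.filter_false_of_mem; intro s _; omega
      rw [h0]
      simp only [hWdef, h0, Finset.sum_empty, add_zero, Finset.card_empty, pow_zero, one_mul]
      rw [Matrix.det_smul, Matrix.det_one, Fintype.card_fin, mul_one]
    | succ t ih =>
      by_cases htS : t ∈ S
      · have htnot : t ∉ S.filter (· < t) := by simp
        have hfilt : S.filter (· < t+1) = insert t (S.filter (· < t)) := by
          ext s
          simp only [Finset.mem_insert, Finset.mem_filter]
          constructor
          · rintro ⟨h1, h2⟩
            rcases Nat.lt_succ_iff_lt_or_eq.mp h2 with h | rfl
            · exact Or.inr ⟨h1, h⟩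
            · exact Or.inl rfl
          · rintro (rfl | ⟨h1, h2⟩)
            · exact ⟨htS, Nat.lt_succ_self _⟩
            · exact ⟨h1, h2.trans (Nat.lt_succ_self _)⟩
        have hWsucc : W (t+1) = W t + O t := by
          simp only [hWdef, hfilt, Finset.sum_insert htnot]
          abel
        rw [hWsucc, aux_det_add_outer (hWpd t), hfilt,
          Finset.card_insert_of_notMem htnot, pow_succ]
        have h2 : 2 ≤ 1 + x t ⬝ᵥ (W t)⁻¹ *ᵥ x t := by linarith [hgt t htS]
        have hdet0 : (0:ℝ) < (W t).det := (hWpd t).det_pos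
        have hnn : (0:ℝ) ≤ 2^((S.filter (· < t)).card) * lam^d := by positivity
        nlinarith [ih]
      · have hfilt : S.filter (· < t+1) = S.filter (· < t) := by
          ext s
          simp only [Finset.mem_filter]
          constructor
          · rintro ⟨h1, h2⟩
            rcases Nat.lt_succ_iff_lt_or_eq.mp h2 with h | rfl
            · exact ⟨h1, h⟩
            · exact absurd h1 htS
          · rintro ⟨h1, h2⟩
            exact ⟨h1, h2.trans (Nat.lt_succ_self _)⟩
        have hWsucc : W (t+1) = W t := by simp only [hWdef, hfilt]
        rw [hWsucc, hfilt]
        exact ih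
  have hfinalS : S.filter (· < T+1) = S := by
    apply Finset.filter_true_of_mem
    intro s hs
    have : s ∈ Finset.Icc 1 T := (Finset.mem_filter.mp hs).1
    rw [Finset.mem_Icc] at this
    omega
  have hdetA : (2:ℝ)^m * lam^d ≤ (W (T+1)).det := by
    have := hdetlb (T+1)
    rwa [hfinalS] at this
  -- trace upper bound
  have htrO : ∀ s, (O s).trace ≤ 1 := by
    intro s
    have h1 : (O s).trace = ∑ i, (x s i)^2 := by
      simp [Matrix.trace, Matrix.diag, hO, sq]
    have h2 : ∑ i, (x s i)^2 = ‖x s‖^2 := by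
      rw [EuclideanSpace.norm_eq, Real.sq_sqrt (by positivity)]
      exact Finset.sum_congr rfl fun i _ => by rw [Real.norm_eq_abs, sq_abs]
    rw [h1, h2]
    have := hx s
    nlinarith [norm_nonneg (x s)]
  have htrace : (W (T+1)).trace ≤ d * lam + m := by
    simp only [hWdef, hfinalS]
    rw [Matrix.trace_add, Matrix.trace_smul, Matrix.trace_one, Matrix.trace_sum]
    have hsum : ∑ s ∈ S, (O s).trace ≤ (m:ℝ) := by
      calc ∑ s ∈ S, (O s).trace ≤ ∑ s ∈ S, (1:ℝ) :=
            Finset.sum_le_sum fun s _ => htrO s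
        _ = m := by rw [Finset.sum_const, hm]; simp
    have : lam • (Fintype.card (Fin d) : ℝ) = d * lam := by
      simp [Fintype.card_fin, smul_eq_mul, mul_comm]
    rw [this]
    linarith
  -- trace nonneg
  have htrnn : (0:ℝ) ≤ (W (T+1)).trace := by
    rw [aux_trace_eq_sum_eigenvalues (hWpd (T+1)).isHermitian]
    exact Finset.sum_nonneg fun i _ => ((hWpd (T+1)).posSemidef.eigenvalues_nonneg i)
  have hdR : (0:ℝ) < d := Nat.cast_pos.mpr hd'
  have hub : (W (T+1)).det ≤ ((d*lam + m)/d)^d := by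
    calc (W (T+1)).det ≤ ((W (T+1)).trace / d)^d :=
          aux_det_le_trace_pow hd' (hWpd _).posSemidef
      _ ≤ ((d*lam + m)/d)^d := by
          apply pow_le_pow_left₀ (by positivity)
          exact (div_le_div_iff_of_pos_right hdR).mpr htrace
  have hcomb : (2:ℝ)^m * lam^d ≤ (((d:ℝ)*lam + m)/d)^d := le_trans hdetA hub
  exact aux_scalar hd' hlam (aux_log_step hd' hlam hcomb)
end

section
/- Let { x_{t,k} }_{t ∈ [T], k ∈ [K]} ⊂ ℝ^d with ‖x_{t,k}‖₂ ≤ 1 for all t, k, let λ > 0, and let V_t = λ I_d + Σ_{s=1}^{t−1} Σ_{k=1}^K x_{s,k} x_{s,k}ᵀ. Define H_T = { t ∈ [T] : Σ_{k=1}^K ‖x_{t,k}‖²_{V_t^{−1}} > 1 }. Then |H_T| ≤ (2d / log 2) · log( 1 + K/(λ log 2) ). -/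
open Matrix Finset

variable {d : ℕ}

noncomputable def outer (v : Fin d → ℝ) : Matrix (Fin d) (Fin d) ℝ := Matrix.of fun i j => v i * v j

lemma outer_mulVec (v y : Fin d → ℝ) : outer v *ᵥ y = fun i => v i * (v ⬝ᵥ y) := by
  ext i
  simp only [outer, mulVec, dotProduct, of_apply, Finset.mul_sum]
  apply Finset.sum_congr rfl; intros; ring

lemma dot_outer (v y : Fin d → ℝ) : y ⬝ᵥ (outer v *ᵥ y) = (v ⬝ᵥ y)^2 := by
  rw [outer_mulVec, dotProduct]
  have h : ∀ i ∈ Finset.univ, y i * (v i * (v ⬝ᵥ y)) = (v i * y i) * (v ⬝ᵥ y) := by intros; ring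
  rw [Finset.sum_congr rfl h, ← Finset.sum_mul, pow_two]
  simp [dotProduct, mul_comm]

lemma outer_posSemidef (v : Fin d → ℝ) : (outer v).PosSemidef := by
  apply Matrix.PosSemidef.of_dotProduct_mulVec_nonneg
  · ext i j; simp [outer, conjTranspose, mul_comm]
  · intro y
    show (0:ℝ) ≤ star y ⬝ᵥ (outer v *ᵥ y)
    rw [show (star y) = y from rfl, dot_outer]
    positivity

lemma quadForm_eq (M : Matrix (Fin d) (Fin d) ℝ) (y : Fin d → ℝ) :
    (∑ i, ∑ j, y i * M i j * y j) = y ⬝ᵥ (M *ᵥ y) := by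
  simp only [dotProduct, mulVec, Finset.mul_sum]
  apply Finset.sum_congr rfl; intro i _
  apply Finset.sum_congr rfl; intro j _; ring

lemma trace_outer (v : Fin d → ℝ) : (outer v).trace = v ⬝ᵥ v := by
  simp [Matrix.trace, outer, Matrix.diag_apply, dotProduct]

lemma trace_mul_outer (M : Matrix (Fin d) (Fin d) ℝ) (v : Fin d → ℝ) :
    (M * outer v).trace = v ⬝ᵥ (M *ᵥ v) := by
  simp only [Matrix.trace, Matrix.diag_apply, mul_apply, outer, of_apply, dotProduct, mulVec,
    Finset.mul_sum]
  apply Finset.sum_congr rfl; intro i _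
  apply Finset.sum_congr rfl; intro j _; ring

lemma dot_sym {M : Matrix (Fin d) (Fin d) ℝ} (hM : M.IsHermitian) (u v : Fin d → ℝ) :
    u ⬝ᵥ (M *ᵥ v) = v ⬝ᵥ (M *ᵥ u) := by
  have hsym : ∀ i j, M j i = M i j := by
    intro i j
    have := congrFun (congrFun hM i) j
    simpa [conjTranspose_apply] using this
  simp only [dotProduct, mulVec, Finset.mul_sum]
  rw [Finset.sum_comm]
  apply Finset.sum_congr rfl; intro i _
  apply Finset.sum_congr rfl; intro j _
  rw [hsym i j]; ring

lemma psd_nonneg {M : Matrix (Fin d) (Fin d) ℝ} (hM : M.PosSemidef) (v : Fin d → ℝ) :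
    0 ≤ v ⬝ᵥ (M *ᵥ v) := hM.dotProduct_mulVec_nonneg v

lemma psd_cauchy {M : Matrix (Fin d) (Fin d) ℝ} (hM : M.PosSemidef) (u v : Fin d → ℝ) :
    (u ⬝ᵥ (M *ᵥ v))^2 ≤ (u ⬝ᵥ (M *ᵥ u)) * (v ⬝ᵥ (M *ᵥ v)) := by
  have key : ∀ t : ℝ, 0 ≤ (v ⬝ᵥ (M *ᵥ v)) * (t * t) + (2 * (u ⬝ᵥ (M *ᵥ v))) * t
      + (u ⬝ᵥ (M *ᵥ u)) := by
    intro t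
    have h0 : (0:ℝ) ≤ (u + t • v) ⬝ᵥ (M *ᵥ (u + t • v)) := hM.dotProduct_mulVec_nonneg (u + t • v)
    have hsym := dot_sym hM.isHermitian u v
    simp only [mulVec_add, mulVec_smul, dotProduct_add, add_dotProduct, dotProduct_smul,
      smul_dotProduct, smul_eq_mul] at h0
    rw [dot_sym hM.isHermitian v u] at h0
    nlinarith [h0]
  have hd := discrim_le_zero key
  simp only [discrim] at hd
  nlinarith [hd]

lemma inv_quad_le {A B : Matrix (Fin d) (Fin d) ℝ} (hA : A.PosDef) (hB : B.PosDef)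
    (hAB : (B - A).PosSemidef) (w : Fin d → ℝ) :
    w ⬝ᵥ (B⁻¹ *ᵥ w) ≤ w ⬝ᵥ (A⁻¹ *ᵥ w) := by
  set y := B⁻¹ *ᵥ w with hy
  have hBu : IsUnit B.det := hB.det_pos.ne'.isUnit
  have hAu : IsUnit A.det := hA.det_pos.ne'.isUnit
  have hBy : B *ᵥ y = w := by
    rw [hy, mulVec_mulVec, mul_nonsing_inv B hBu, one_mulVec]
  have hAinv : (A * A⁻¹) = 1 := mul_nonsing_inv A hAu
  set u := A⁻¹ *ᵥ w with hu
  have hc : u ⬝ᵥ (A *ᵥ y) = w ⬝ᵥ y := by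
    rw [dot_sym hA.isHermitian u y, hu, mulVec_mulVec, hAinv, one_mulVec, dotProduct_comm]
  have huu : u ⬝ᵥ (A *ᵥ u) = w ⬝ᵥ (A⁻¹ *ᵥ w) := by
    conv_lhs => rw [hu, mulVec_mulVec, hAinv, one_mulVec]
    rw [dotProduct_comm]
  have hyy : y ⬝ᵥ (A *ᵥ y) ≤ w ⬝ᵥ y := by
    have h1 : 0 ≤ y ⬝ᵥ ((B - A) *ᵥ y) := hAB.dotProduct_mulVec_nonneg y
    have h2 : y ⬝ᵥ (B *ᵥ y) = y ⬝ᵥ w := by rw [hBy]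
    simp only [sub_mulVec, dotProduct_sub] at h1
    rw [dotProduct_comm w y]
    linarith [h1, h2]
  have hCS := psd_cauchy hA.posSemidef u y
  rw [hc, huu] at hCS
  have hc0 : 0 ≤ w ⬝ᵥ y := by
    rw [hy]; exact psd_nonneg hB.inv.posSemidef w
  have hq0 : 0 ≤ w ⬝ᵥ (A⁻¹ *ᵥ w) := psd_nonneg hA.inv.posSemidef w
  rcases eq_or_lt_of_le hc0 with h | h
  · rw [hy] at h; linarith [h.symm, hq0]
  · have hy0 : 0 ≤ y ⬝ᵥ (A *ᵥ y) := psd_nonneg hA.posSemidef y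
    nlinarith [hCS, h, hyy]

lemma one_add_sum_le_prod {ι : Type*} {s : Finset ι} {f : ι → ℝ} (hf : ∀ i ∈ s, 0 ≤ f i) :
    1 + ∑ i ∈ s, f i ≤ ∏ i ∈ s, (1 + f i) := by
  induction s using Finset.cons_induction with
  | empty => simp
  | cons a s ha ih =>
    rw [Finset.prod_cons, Finset.sum_cons]
    have h1 := ih (fun i hi => hf i (Finset.mem_cons_of_mem hi))
    have ha0 := hf a (Finset.mem_cons_self a s)
    have hs0 : 0 ≤ ∑ i ∈ s, f i :=
      Finset.sum_nonneg (fun i hi => hf i (Finset.mem_cons_of_mem hi))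
    nlinarith

lemma trace_eq_sum_eig {M : Matrix (Fin d) (Fin d) ℝ} (hH : M.IsHermitian) :
    M.trace = ∑ i, hH.eigenvalues i := by
  have hUU : (star (hH.eigenvectorUnitary : Matrix (Fin d) (Fin d) ℝ)) *
      (hH.eigenvectorUnitary : Matrix (Fin d) (Fin d) ℝ) = 1 :=
    Unitary.coe_star_mul_self hH.eigenvectorUnitary
  conv_lhs => rw [hH.spectral_theorem, Unitary.conjStarAlgAut_apply]
  rw [trace_mul_cycle, hUU, one_mul, trace_diagonal]
  simp

lemma det_one_add_psd {M : Matrix (Fin d) (Fin d) ℝ} (hM : M.PosSemidef) :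
    1 + M.trace ≤ (1 + M).det := by
  have hH := hM.isHermitian
  set U : Matrix (Fin d) (Fin d) ℝ := (hH.eigenvectorUnitary : Matrix (Fin d) (Fin d) ℝ) with hU
  have hUU : U * star U = 1 := (Matrix.mem_unitaryGroup_iff).mp hH.eigenvectorUnitary.2
  have hUU' : star U * U = 1 := Unitary.coe_star_mul_self hH.eigenvectorUnitary
  set f : Fin d → ℝ := hH.eigenvalues with hf
  have hfnn : ∀ i, 0 ≤ f i := fun i => hM.eigenvalues_nonneg i
  have hspec : M = U * diagonal f * star U := by
    conv_lhs => rw [hH.spectral_theorem, Unitary.conjStarAlgAut_apply]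
    congr 1
  have h1M : 1 + M = U * diagonal (fun i => 1 + f i) * star U := by
    have : diagonal (fun i => 1 + f i) = 1 + diagonal f := by
      rw [← diagonal_one, diagonal_add]
    rw [this, mul_add, add_mul, mul_one, hUU, ← hspec]
  have hdet : (1 + M).det = ∏ i, (1 + f i) := by
    rw [h1M, det_mul, det_mul, mul_comm, ← mul_assoc, ← det_mul, hUU', det_one, one_mul,
      det_diagonal]
  have htr : M.trace = ∑ i, f i := trace_eq_sum_eig hH
  rw [hdet, htr]
  exact one_add_sum_le_prod (fun i _ => hfnn i)

lemma det_le_trace_pow {W : Matrix (Fin d) (Fin d) ℝ} (hd : 0 < d) (hW : W.PosDef) :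
    W.det ≤ (W.trace / d)^d := by
  have hH := hW.isHermitian
  have hfnn : ∀ i, 0 ≤ hH.eigenvalues i := fun i => hW.posSemidef.eigenvalues_nonneg i
  have hdet : W.det = ∏ i, hH.eigenvalues i := by
    have := hH.det_eq_prod_eigenvalues
    simpa using this
  have htr : W.trace = ∑ i, hH.eigenvalues i := trace_eq_sum_eig hH
  have hAM : ∏ i, (hH.eigenvalues i) ^ ((1:ℝ)/d) ≤ ∑ i : Fin d, (1/d : ℝ) * hH.eigenvalues i := by
    apply Real.geom_mean_le_arith_mean_weighted
    · intro i _; positivity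
    · simp [Finset.card_univ]
      field_simp
    · intro i _; exact hfnn i
  have hsum : ∑ i : Fin d, (1/d : ℝ) * hH.eigenvalues i = W.trace / d := by
    rw [htr, Finset.sum_div]
    apply Finset.sum_congr rfl; intros; ring
  have hprod : W.det = (∏ i, (hH.eigenvalues i) ^ ((1:ℝ)/d))^d := by
    rw [← Finset.prod_pow, hdet]
    apply Finset.prod_congr rfl
    intro i _
    rw [← Real.rpow_natCast ((hH.eigenvalues i) ^ ((1:ℝ)/d)) d, ← Real.rpow_mul (hfnn i)]
    rw [one_div, inv_mul_cancel₀ (by exact_mod_cast hd.ne'), Real.rpow_one]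
  rw [hprod]
  apply pow_le_pow_left₀ (Finset.prod_nonneg (fun i _ => Real.rpow_nonneg (hfnn i) _))
  rw [← hsum]; exact hAM

open scoped MatrixOrder in
lemma det_add_psd_ge {A Δ : Matrix (Fin d) (Fin d) ℝ} (hA : A.PosDef) (hΔ : Δ.PosSemidef) :
    A.det * (1 + (A⁻¹ * Δ).trace) ≤ (A + Δ).det := by
  have hAu : IsUnit A.det := hA.det_pos.ne'.isUnit
  have hAinv : A * A⁻¹ = 1 := mul_nonsing_inv A hAu
  set S := CFC.sqrt (A⁻¹) with hSdef
  have hSS : S * S = A⁻¹ := CFC.sqrt_mul_sqrt_self (A⁻¹) hA.inv.posSemidef.nonneg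
  have hSherm : S.IsHermitian := (CFC.sqrt_nonneg (A⁻¹)).posSemidef.isHermitian
  have hM : (S * Δ * S).PosSemidef := by
    have := hΔ.mul_mul_conjTranspose_same S
    rwa [hSherm.eq] at this
  have hsplit : A + Δ = A * (1 + A⁻¹ * Δ) := by
    rw [mul_add, mul_one, ← mul_assoc, hAinv, one_mul]
  have hdet1 : (1 + A⁻¹ * Δ).det = (1 + S * Δ * S).det := by
    rw [← hSS, mul_assoc, det_one_add_mul_comm]
  have htr : (S * Δ * S).trace = (A⁻¹ * Δ).trace := by
    rw [trace_mul_cycle, hSS]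
  have hkey := det_one_add_psd hM
  rw [htr] at hkey
  calc A.det * (1 + (A⁻¹ * Δ).trace) ≤ A.det * (1 + S * Δ * S).det := by
        apply mul_le_mul_of_nonneg_left _ hA.det_pos.le
        rw [← htr]; exact det_one_add_psd hM
    _ = (A + Δ).det := by rw [hsplit, det_mul, hdet1]

lemma det_step {A : Matrix (Fin d) (Fin d) ℝ} (hA : A.PosDef) {K : ℕ} (xs : Fin K → Fin d → ℝ) :
    A.det * (1 + ∑ k, xs k ⬝ᵥ (A⁻¹ *ᵥ xs k)) ≤ (A + ∑ k, outer (xs k)).det := by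
  have hΔ : (∑ k, outer (xs k)).PosSemidef := by
    exact Finset.sum_induction (fun k => outer (xs k)) Matrix.PosSemidef
      (fun a b ha hb => ha.add hb) Matrix.PosSemidef.zero (fun k _ => outer_posSemidef (xs k))
  have htr : (A⁻¹ * ∑ k, outer (xs k)).trace = ∑ k, xs k ⬝ᵥ (A⁻¹ *ᵥ xs k) := by
    rw [Matrix.mul_sum, trace_sum]
    exact Finset.sum_congr rfl (fun k _ => trace_mul_outer _ _)
  have := det_add_psd_ge hA hΔ
  rwa [htr] at this

lemma scalar_count {m d K lam : ℝ} (hd : 1 ≤ d) (hK : 1 ≤ K) (hlam : 0 < lam) (hm0 : 0 ≤ m)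
    (h1 : m * Real.log 2 ≤ d * Real.log (1 + m * K / (d * lam))) :
    m ≤ (2 * d / Real.log 2) * Real.log (1 + K / (lam * Real.log 2)) := by
  have hl2 : 0 < Real.log 2 := Real.log_pos (by norm_num)
  have hd0 : 0 < d := by linarith
  have hK0 : 0 < K := by linarith
  set u : ℝ := K / (lam * Real.log 2) with hu
  have hu0 : 0 < u := by rw [hu]; positivity
  clear_value u
  set L : ℝ := Real.log (1 + u) with hL
  clear_value L
  have hL0 : 0 < L := by rw [hL]; exact Real.log_pos (by linarith)
  set C : ℝ := (2 * d / Real.log 2) * L with hC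
  have hC0 : 0 < C := by positivity
  by_contra hcon
  push_neg at hcon
  clear_value C
  have hKeq : K = u * (lam * Real.log 2) := by
    rw [hu]; field_simp
  have hCK : C * K / (d * lam) = 2 * u * L := by
    rw [hC, hKeq]; field_simp
  have hLlt : L < 1 + u / 2 := by
    have h2 : Real.log ((1 + u) / 2) ≤ (1 + u) / 2 - 1 :=
      Real.log_le_sub_one_of_pos (by positivity)
    have h3 : Real.log ((1 + u) / 2) = L - Real.log 2 := by
      rw [hL]; exact Real.log_div (by linarith) (by norm_num)
    have h4 : Real.log 2 < 1 := by
      have := Real.log_two_lt_d9; linarith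
    linarith
  set y : ℝ := 1 + 2 * u * L with hy
  clear_value y
  have hy1 : 1 ≤ y := by nlinarith
  have hy0 : 0 < y := by linarith
  have hClog : C * Real.log 2 = 2 * d * L := by
    rw [hC]; field_simp
  have s2 : d * Real.log y < C * Real.log 2 := by
    have harg : y < (1 + u) ^ 2 := by nlinarith
    have hlt : Real.log y < Real.log ((1 + u) ^ 2) := Real.log_lt_log hy0 harg
    have h5 : Real.log ((1 + u) ^ 2) = 2 * L := by
      rw [Real.log_pow, ← hL]; norm_num
    rw [h5] at hlt
    rw [hClog]
    nlinarith
  have s1 : Real.log (1 + m * K / (d * lam)) ≤ Real.log y + (m - C) * K / (d * lam) / y := by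
    have hx0 : 0 < 1 + m * K / (d * lam) := by positivity
    have hdiv : Real.log ((1 + m * K / (d * lam)) / y) ≤ (1 + m * K / (d * lam)) / y - 1 :=
      Real.log_le_sub_one_of_pos (by positivity)
    rw [Real.log_div hx0.ne' hy0.ne'] at hdiv
    have hyCK : y = 1 + C * K / (d * lam) := by rw [hy, hCK]
    have heq : (1 + m * K / (d * lam)) / y - 1 = (m - C) * K / (d * lam) / y := by
      have h7 : (1 + m * K / (d * lam)) / y - 1 = (1 + m * K / (d * lam) - y) / y := by
        rw [sub_div, div_self hy0.ne']
      rw [h7, hyCK]; ring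
    linarith
  have huy : u ≤ y := by
    rcases le_or_gt u 1 with h | h
    · nlinarith
    · have hgt : Real.log 2 < L := by
        rw [hL]; exact Real.log_lt_log (by norm_num) (by linarith)
      nlinarith [Real.log_two_gt_d9]
  have hinner : K / (lam * y) ≤ Real.log 2 := by
    rw [div_le_iff₀ (by positivity)]
    nlinarith [mul_le_mul_of_nonneg_left huy (mul_nonneg hlam.le hl2.le)]
  have s3 : (m - C) * K / (d * lam) / y * d ≤ (m - C) * Real.log 2 := by
    have heq : (m - C) * K / (d * lam) / y * d = (m - C) * (K / (lam * y)) := by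
      rw [div_div, div_mul_eq_mul_div, mul_div_assoc]
      rw [show d * lam * y = d * (lam * y) by ring, div_mul_cancel_left₀ hd0.ne']
      rw [div_eq_mul_inv K (lam * y)]
      ring
    rw [heq]
    have := mul_le_mul_of_nonneg_left hinner (by linarith : (0:ℝ) ≤ m - C)
    linarith
  have hfin : d * Real.log (1 + m * K / (d * lam))
      ≤ d * Real.log y + (m - C) * K / (d * lam) / y * d := by
    have h8 := mul_le_mul_of_nonneg_left s1 hd0.le
    linarith [h8, mul_add d (Real.log y) ((m - C) * K / (d * lam) / y)]
  linarith [hfin, s2, s3, h1]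

lemma psd_sum {ι : Type*} (s : Finset ι) (f : ι → Matrix (Fin d) (Fin d) ℝ)
    (h : ∀ i ∈ s, (f i).PosSemidef) : (∑ i ∈ s, f i).PosSemidef :=
  Finset.sum_induction f _ (fun a b ha hb => ha.add hb) Matrix.PosSemidef.zero h

lemma lamI_posdef {lam : ℝ} (hlam : 0 < lam) :
    (lam • (1 : Matrix (Fin d) (Fin d) ℝ)).PosDef := by
  rw [smul_one_eq_diagonal]
  exact Matrix.PosDef.diagonal (fun i => hlam)

lemma lamI_add_posdef {lam : ℝ} (hlam : 0 < lam) {S : Matrix (Fin d) (Fin d) ℝ}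
    (hS : S.PosSemidef) : (lam • (1 : Matrix (Fin d) (Fin d) ℝ) + S).PosDef :=
  (lamI_posdef hlam).add_posSemidef hS

lemma det_lamI {lam : ℝ} : (lam • (1 : Matrix (Fin d) (Fin d) ℝ)).det = lam ^ d := by
  rw [det_smul, det_one, mul_one, Fintype.card_fin]

lemma trace_lamI {lam : ℝ} : (lam • (1 : Matrix (Fin d) (Fin d) ℝ)).trace = lam * d := by
  rw [trace_smul, trace_one, Fintype.card_fin, smul_eq_mul]

lemma quadForm_eq' (M : Matrix (Fin d) (Fin d) ℝ) (y : Fin d → ℝ) :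
    quadForm M y = y ⬝ᵥ (M *ᵥ y) := quadForm_eq M y

/-- generalized elliptical potential count lemma.  For a doubly-indexed family of
unit-norm-bounded vectors `x_{t,k}` and `V_t = λ I + Σ_{s=1}^{t-1} Σ_{k=1}^K x_{s,k} x_{s,k}ᵀ`,
the number of rounds `t ∈ [T]` with `Σ_k ‖x_{t,k}‖²_{V_t⁻¹} > 1` is at most
`(2d/log 2) · log(1 + K/(λ log 2))`. -/
theorem stmt_15 (d T K : ℕ) (x : ℕ → Fin K → EuclideanSpace ℝ (Fin d))
    (hx : ∀ t k, ‖x t k‖ ≤ 1)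
    (lam : ℝ) (hlam : 0 < lam)
    (V : ℕ → Matrix (Fin d) (Fin d) ℝ)
    (hV : ∀ t, V t = lam • (1 : Matrix (Fin d) (Fin d) ℝ)
      + ∑ s ∈ Finset.Ico 1 t, ∑ k : Fin K, Matrix.of (fun i j => x s k i * x s k j)) :
    (((Finset.Icc 1 T).filter
        (fun t => 1 < ∑ k : Fin K, quadForm ((V t)⁻¹) (fun i => x t k i))).card : ℝ)
      ≤ (2 * d / Real.log 2) * Real.log (1 + K / (lam * Real.log 2)) := by
  classical
  set H : Finset ℕ := (Finset.Icc 1 T).filter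
      (fun t => 1 < ∑ k : Fin K, quadForm ((V t)⁻¹) (fun i => x t k i)) with hHdef
  rcases Nat.eq_zero_or_pos d with hd0 | hdpos
  · subst hd0
    have hHe : H = ∅ := by
      rw [hHdef, Finset.filter_eq_empty_iff]
      intro t _
      simp [quadForm]
    rw [hHe]
    simp
  rcases Nat.eq_zero_or_pos K with hK0 | hKpos
  · subst hK0
    have hHe : H = ∅ := by
      rw [hHdef, Finset.filter_eq_empty_iff]
      intro t _
      simp
    rw [hHe]
    simp
  -- main case: d ≥ 1, K ≥ 1
  set xv : ℕ → Fin K → Fin d → ℝ := fun t k i => x t k i with hxv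
  set g : ℕ → Matrix (Fin d) (Fin d) ℝ := fun s => ∑ k : Fin K, outer (xv s k) with hg
  have hgpsd : ∀ s, (g s).PosSemidef := fun s =>
    psd_sum _ _ (fun k _ => outer_posSemidef (xv s k))
  have hVg : ∀ t, V t = lam • (1 : Matrix (Fin d) (Fin d) ℝ) + ∑ s ∈ Finset.Ico 1 t, g s :=
    fun t => hV t
  have hVpos : ∀ t, (V t).PosDef := by
    intro t
    rw [hVg t]
    exact lamI_add_posdef hlam (psd_sum _ _ (fun s _ => hgpsd s))
  set m : ℕ := H.card with hm
  set e : Fin m → ℕ := fun i => ((H.orderIsoOfFin hm.symm) i : ℕ) with he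
  have heH : ∀ i, e i ∈ H := fun i => ((H.orderIsoOfFin hm.symm) i).2
  have heStrict : ∀ i j : Fin m, i < j → e i < e j := by
    intro i j hij
    exact (H.orderIsoOfFin hm.symm).lt_iff_lt.mpr hij
  have heInj : Function.Injective e := by
    intro i j hij
    rcases lt_trichotomy i j with h | h | h
    · exact absurd hij (heStrict i j h).ne
    · exact h
    · exact absurd hij.symm (heStrict j i h).ne
  have he1 : ∀ i, 1 ≤ e i := by
    intro i
    have := (Finset.mem_filter.mp (heH i)).1
    exact (Finset.mem_Icc.mp this).1
  set F : ℕ → ℕ := fun i => if h : i < m then e ⟨i, h⟩ else 0 with hF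
  set A : ℕ → Matrix (Fin d) (Fin d) ℝ :=
    fun j => lam • (1 : Matrix (Fin d) (Fin d) ℝ) + ∑ i ∈ Finset.range j, g (F i) with hA
  have hApos : ∀ j, (A j).PosDef := fun j =>
    lamI_add_posdef hlam (psd_sum _ _ (fun s _ => hgpsd (F s)))
  -- comparison with V
  have hsub : ∀ j : Fin m, (V (e j) - A (j : ℕ)).PosSemidef := by
    intro j
    set Q : Finset ℕ := (Finset.range (j : ℕ)).image F with hQ
    have hQsub : Q ⊆ Finset.Ico 1 (e j) := by
      intro s hs
      rcases Finset.mem_image.mp hs with ⟨i, hi, rfl⟩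
      have hilt : i < (j : ℕ) := Finset.mem_range.mp hi
      have him : i < m := hilt.trans j.2
      rw [hF]
      simp only [dif_pos him]
      refine Finset.mem_Ico.mpr ⟨he1 _, ?_⟩
      exact heStrict ⟨i, him⟩ j (by exact hilt)
    have himg : ∑ s ∈ Q, g s = ∑ i ∈ Finset.range (j : ℕ), g (F i) := by
      rw [hQ]
      apply Finset.sum_image
      intro a ha b hb hab
      have haa : a < m := (Finset.mem_range.mp ha).trans j.2
      have hbb : b < m := (Finset.mem_range.mp hb).trans j.2
      rw [hF] at hab
      simp only [dif_pos haa, dif_pos hbb] at hab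
      have := heInj hab
      exact Fin.mk.inj_iff.mp this
    have hsplit : V (e j) = A (j : ℕ) + ∑ s ∈ Finset.Ico 1 (e j) \ Q, g s := by
      rw [hVg (e j), hA, ← Finset.sum_sdiff hQsub, himg]
      beta_reduce
      abel
    rw [hsplit]
    have : A (j : ℕ) + ∑ s ∈ Finset.Ico 1 (e j) \ Q, g s - A (j : ℕ)
        = ∑ s ∈ Finset.Ico 1 (e j) \ Q, g s := by abel
    rw [this]
    exact psd_sum _ _ (fun s _ => hgpsd s)
  -- the key per-step determinant growth
  have hstep : ∀ j : Fin m, 2 * (A (j : ℕ)).det ≤ (A ((j : ℕ) + 1)).det := by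
    intro j
    have hAj := hApos (j : ℕ)
    have hVj := hVpos (e j)
    have hmemf := (Finset.mem_filter.mp (heH j)).2
    have hgt : 1 < ∑ k : Fin K, (xv (e j) k) ⬝ᵥ ((V (e j))⁻¹ *ᵥ (xv (e j) k)) := by
      calc (1:ℝ) < ∑ k : Fin K, quadForm ((V (e j))⁻¹) (fun i => x (e j) k i) := hmemf
        _ = ∑ k : Fin K, (xv (e j) k) ⬝ᵥ ((V (e j))⁻¹ *ᵥ (xv (e j) k)) := by
            apply Finset.sum_congr rfl
            intro k _
            exact quadForm_eq' _ _
    have hcmp : ∑ k : Fin K, (xv (e j) k) ⬝ᵥ ((V (e j))⁻¹ *ᵥ (xv (e j) k))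
        ≤ ∑ k : Fin K, (xv (e j) k) ⬝ᵥ ((A (j : ℕ))⁻¹ *ᵥ (xv (e j) k)) := by
      apply Finset.sum_le_sum
      intro k _
      exact inv_quad_le hAj hVj (hsub j) (xv (e j) k)
    have hdet := det_step hAj (fun k => xv (e j) k)
    have hA1 : A ((j : ℕ) + 1) = A (j : ℕ) + ∑ k : Fin K, outer (xv (e j) k) := by
      rw [hA]
      simp only [Finset.sum_range_succ]
      rw [add_assoc]
      congr 1
      congr 1
      rw [hF]
      simp only [dif_pos j.2]
      rfl
    rw [← hA1] at hdet
    have hdpos' := hAj.det_pos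
    nlinarith [hdet, hdpos', hgt.trans_le hcmp]
  -- chain the determinant growth
  have hchain : ∀ j, j ≤ m → (2:ℝ) ^ j * lam ^ d ≤ (A j).det := by
    intro j
    induction j with
    | zero =>
      intro _
      have : A 0 = lam • (1 : Matrix (Fin d) (Fin d) ℝ) := by
        rw [hA]; simp
      rw [this, det_lamI]
      simp
    | succ n ih =>
      intro hn
      have hnm : n < m := hn
      have h1 := ih hnm.le
      have h2 := hstep ⟨n, hnm⟩
      have : (2:ℝ) ^ (n + 1) * lam ^ d = 2 * ((2:ℝ) ^ n * lam ^ d) := by ring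
      rw [this]
      calc 2 * ((2:ℝ) ^ n * lam ^ d) ≤ 2 * (A n).det := by linarith
        _ ≤ (A (n + 1)).det := h2
  -- trace bound
  have hdot1 : ∀ t k, (xv t k) ⬝ᵥ (xv t k) ≤ 1 := by
    intro t k
    have hnorm : ‖x t k‖ ^ 2 = ∑ i, (x t k i) ^ 2 := by
      rw [EuclideanSpace.norm_eq]
      rw [Real.sq_sqrt (Finset.sum_nonneg (fun i _ => sq_nonneg _))]
      apply Finset.sum_congr rfl
      intro i _
      rw [Real.norm_eq_abs, sq_abs]
    have : (xv t k) ⬝ᵥ (xv t k) = ∑ i, (x t k i) ^ 2 := by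
      rw [hxv, dotProduct]
      apply Finset.sum_congr rfl
      intro i _
      ring
    rw [this, ← hnorm]
    have h1 := hx t k
    nlinarith [norm_nonneg (x t k)]
  have htrg : ∀ s, (g s).trace ≤ K := by
    intro s
    rw [hg, trace_sum]
    calc ∑ k : Fin K, (outer (xv s k)).trace = ∑ k : Fin K, (xv s k) ⬝ᵥ (xv s k) := by
          apply Finset.sum_congr rfl
          intro k _
          exact trace_outer _
      _ ≤ ∑ k : Fin K, 1 := Finset.sum_le_sum (fun k _ => hdot1 s k)
      _ = K := by simp
  have htrace : (A m).trace ≤ lam * d + m * K := by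
    rw [hA, trace_add, trace_lamI, trace_sum]
    have : ∑ i ∈ Finset.range m, (g (F i)).trace ≤ ∑ i ∈ Finset.range m, (K:ℝ) :=
      Finset.sum_le_sum (fun i _ => htrg (F i))
    simp only [Finset.sum_const, Finset.card_range, nsmul_eq_mul] at this
    linarith
  -- combine
  have htrace0 : 0 ≤ (A m).trace := by
    rw [hA, trace_add, trace_lamI, trace_sum]
    have h1 : ∀ i ∈ Finset.range m, 0 ≤ (g (F i)).trace := by
      intro i _
      rw [hg, trace_sum]
      apply Finset.sum_nonneg
      intro k _
      rw [trace_outer]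
      exact Finset.sum_nonneg (fun i _ => mul_self_nonneg _)
    have h2 : 0 ≤ ∑ i ∈ Finset.range m, (g (F i)).trace := Finset.sum_nonneg h1
    have h3 : 0 ≤ lam * d := by positivity
    linarith
  have hdetub : (A m).det ≤ ((lam * d + m * K) / d) ^ d := by
    calc (A m).det ≤ ((A m).trace / d) ^ d := det_le_trace_pow hdpos (hApos m)
      _ ≤ ((lam * d + m * K) / d) ^ d := by
          apply pow_le_pow_left₀
          · exact div_nonneg htrace0 (Nat.cast_nonneg d)
          · exact div_le_div_of_nonneg_right htrace (Nat.cast_nonneg d)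
  have hfinal : (2:ℝ) ^ m * lam ^ d ≤ ((lam * d + m * K) / d) ^ d :=
    (hchain m le_rfl).trans hdetub
  have hd0' : (0:ℝ) < d := by exact_mod_cast hdpos
  have hP : (lam * d + m * K) / d = lam * (1 + m * K / (d * lam)) := by
    field_simp
  have hden : (0:ℝ) < (d:ℝ) * lam := mul_pos hd0' hlam
  have hnum : (0:ℝ) ≤ (m:ℝ) * (K:ℝ) := mul_nonneg (Nat.cast_nonneg m) (Nat.cast_nonneg K)
  have hx1 : (0:ℝ) < 1 + (m:ℝ) * K / ((d:ℝ) * lam) := by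
    have := div_nonneg hnum hden.le
    linarith
  have h2m : (0:ℝ) < (2:ℝ) ^ m := pow_pos (by norm_num) m
  have hlamd : (0:ℝ) < lam ^ d := pow_pos hlam d
  have hposL : (0:ℝ) < 2 ^ m * lam ^ d := mul_pos h2m hlamd
  have hlog := Real.log_le_log hposL hfinal
  rw [Real.log_mul h2m.ne' hlamd.ne', Real.log_pow, Real.log_pow, hP, Real.log_pow,
    Real.log_mul hlam.ne' hx1.ne'] at hlog
  have h1 : (m : ℝ) * Real.log 2 ≤ (d : ℝ) * Real.log (1 + (m : ℝ) * K / ((d : ℝ) * lam)) := by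
    nlinarith [hlog]
  exact scalar_count (Nat.one_le_cast.mpr hdpos) (Nat.one_le_cast.mpr hKpos) hlam
    (Nat.cast_nonneg m) h1
end

section
/- Let { x_{t,k} }_{t ∈ [T], k ∈ [K]} ⊂ ℝ^d with ‖x_{t,k}‖₂ ≤ 1 for all t, k, let λ > 0, and let V_t = λ I_d + Σ_{s=1}^{t−1} Σ_{k=1}^K x_{s,k} x_{s,k}ᵀ. Then Σ_{t=1}^T min{ 1, Σ_{k=1}^K ‖x_{t,k}‖²_{V_t^{−1}} } ≤ 2 d log( 1 + K T /(d λ) ). -/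
open Matrix Finset Real

lemma aux_prod_one_add {ι : Type*} (s : Finset ι) (f : ι → ℝ) (hf : ∀ i ∈ s, 0 ≤ f i) :
    1 + ∑ i ∈ s, f i ≤ ∏ i ∈ s, (1 + f i) := by
  classical
  induction s using Finset.induction with
  | empty => simp
  | insert a s' hns ih =>
    rw [Finset.sum_insert hns, Finset.prod_insert hns]
    have h1 : 0 ≤ f a := hf a (Finset.mem_insert_self _ _)
    have h2 : 1 + ∑ i ∈ s', f i ≤ ∏ i ∈ s', (1 + f i) :=
      ih fun i hi => hf i (Finset.mem_insert_of_mem hi)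
    have h3 : 0 ≤ ∑ i ∈ s', f i := Finset.sum_nonneg fun i hi => hf i (Finset.mem_insert_of_mem hi)
    nlinarith

lemma aux_det_one_add {n : Type*} [Fintype n] [DecidableEq n] {B : Matrix n n ℝ}
    (hB : B.PosSemidef) : 1 + B.trace ≤ (1 + B).det := by
  have hH := hB.1
  set U : Matrix n n ℝ := (hH.eigenvectorUnitary : Matrix n n ℝ) with hUdef
  have hU : U * star U = 1 := (Matrix.mem_unitaryGroup_iff).mp hH.eigenvectorUnitary.2
  have hU' : star U * U = 1 := (Matrix.mem_unitaryGroup_iff').mp hH.eigenvectorUnitary.2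
  have hspec : B = U * Matrix.diagonal (RCLike.ofReal ∘ hH.eigenvalues) * star U :=
    hH.spectral_theorem
  have h1 : (1 : Matrix n n ℝ) + B = U * (1 + Matrix.diagonal (RCLike.ofReal ∘ hH.eigenvalues)) * star U := by
    rw [mul_add, add_mul, mul_one, hU, ← hspec]
  have hdet : (1 + B).det = ∏ i, (1 + hH.eigenvalues i) := by
    rw [h1, det_mul, det_mul, mul_comm (det U), mul_assoc, ← det_mul, hU, det_one, mul_one]
    rw [← Matrix.diagonal_one, Matrix.diagonal_add, det_diagonal]
    simp [RCLike.ofReal]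
  have htr : B.trace = ∑ i, hH.eigenvalues i := by
    conv_lhs => rw [hspec, Matrix.trace_mul_cycle, hU', one_mul, trace_diagonal]
    simp [RCLike.ofReal]
  rw [hdet, htr]
  exact aux_prod_one_add _ _ fun i _ => hB.eigenvalues_nonneg i

open scoped MatrixOrder in
lemma aux_det_add_psd {n : Type*} [Fintype n] [DecidableEq n] {W A : Matrix n n ℝ}
    (hW : W.PosDef) (hA : A.PosSemidef) :
    W.det * (1 + (W⁻¹ * A).trace) ≤ (W + A).det := by
  set S := CFC.sqrt W with hSdef
  have hSpsd : S.PosSemidef := (CFC.sqrt_nonneg W).posSemidef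
  have hSS : S * S = W := CFC.sqrt_mul_sqrt_self W hW.posSemidef.nonneg
  have hdetS : S.det * S.det = W.det := by rw [← det_mul, hSS]
  have hdetSnn : 0 ≤ S.det := by
    rw [hSpsd.1.det_eq_prod_eigenvalues]
    push_cast
    exact Finset.prod_nonneg fun i _ => hSpsd.eigenvalues_nonneg i
  have hdetSpos : 0 < S.det := by
    rcases hdetSnn.lt_or_eq with h | h
    · exact h
    · exfalso; have := hW.det_pos; rw [← hdetS, ← h, mul_zero] at this; exact lt_irrefl _ this
  have hunit : IsUnit S.det := hdetSpos.ne'.isUnit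
  have hSinv : S * S⁻¹ = 1 := mul_nonsing_inv S hunit
  have hSinv' : S⁻¹ * S = 1 := nonsing_inv_mul S hunit
  have hSinvH : (S⁻¹).IsHermitian := hSpsd.1.inv
  set B := S⁻¹ * A * S⁻¹ with hBdef
  have hBpsd : B.PosSemidef := by
    have := hA.mul_mul_conjTranspose_same S⁻¹
    rwa [hSinvH.eq] at this
  have hsplit : W + A = S * (1 + B) * S := by
    rw [mul_add, add_mul, mul_one, hSS, hBdef]
    congr 1
    rw [← Matrix.mul_assoc, ← Matrix.mul_assoc, hSinv, Matrix.one_mul, Matrix.mul_assoc,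
      hSinv', Matrix.mul_one]
  have htr : B.trace = (W⁻¹ * A).trace := by
    rw [hBdef, Matrix.trace_mul_cycle, ← hSS, Matrix.mul_inv_rev]
  have hdet1B : 1 + B.trace ≤ (1 + B).det := aux_det_one_add hBpsd
  calc W.det * (1 + (W⁻¹ * A).trace) = S.det * (1 + B.trace) * S.det := by
        rw [htr]; rw [← hdetS]; ring
    _ ≤ S.det * (1 + B).det * S.det := by
        apply mul_le_mul_of_nonneg_right _ hdetSpos.le
        exact mul_le_mul_of_nonneg_left hdet1B hdetSpos.le
    _ = (W + A).det := by rw [hsplit, det_mul, det_mul]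

lemma aux_vecMulVec_psd {n : Type*} [Fintype n] (v : n → ℝ) :
    (Matrix.vecMulVec v v).PosSemidef := by
  refine Matrix.PosSemidef.of_dotProduct_mulVec_nonneg ?_ ?_
  · ext i j
    simp [Matrix.vecMulVec_apply, mul_comm, Matrix.conjTranspose_apply]
  · intro y
    have : star y ⬝ᵥ (Matrix.vecMulVec v v *ᵥ y) = (∑ i, v i * y i) ^ 2 := by
      rw [sq, Finset.sum_mul_sum]
      simp only [dotProduct, Matrix.mulVec, Matrix.vecMulVec_apply,
        Pi.star_apply, star_trivial, Finset.mul_sum]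
      apply Finset.sum_congr rfl; intro i _
      apply Finset.sum_congr rfl; intro j _
      ring
    rw [this]
    positivity

lemma aux_min_le_log (u : ℝ) (hu : 0 ≤ u) : min 1 u ≤ 2 * Real.log (1 + u) := by
  have h1u : (0:ℝ) < 1 + u := by linarith
  rcases le_total u 1 with h | h
  · rw [min_eq_right h]
    have hlog : 1 - (1 + u)⁻¹ ≤ Real.log (1 + u) := Real.one_sub_inv_le_log_of_pos h1u
    have : u / (1 + u) ≤ Real.log (1 + u) := by
      have : 1 - (1 + u)⁻¹ = u / (1 + u) := by field_simp; ring
      linarith [hlog, this.symm.le]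
    rw [div_le_iff₀ h1u] at this
    nlinarith
  · rw [min_eq_left h]
    have h2 : Real.log 2 ≤ Real.log (1 + u) := by
      apply Real.log_le_log (by norm_num)
      linarith
    have := Real.log_two_gt_d9
    linarith

lemma aux_trace_eq_sum_eig {n : Type*} [Fintype n] [DecidableEq n] {B : Matrix n n ℝ}
    (hH : B.IsHermitian) : B.trace = ∑ i, hH.eigenvalues i := by
  have hU' : star (hH.eigenvectorUnitary : Matrix n n ℝ) * hH.eigenvectorUnitary = 1 :=
    (Matrix.mem_unitaryGroup_iff').mp hH.eigenvectorUnitary.2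
  have hspec : B = (hH.eigenvectorUnitary : Matrix n n ℝ) * Matrix.diagonal (RCLike.ofReal ∘ hH.eigenvalues) * star (hH.eigenvectorUnitary : Matrix n n ℝ) := hH.spectral_theorem
  conv_lhs => rw [hspec, Matrix.trace_mul_cycle, hU', one_mul, trace_diagonal]
  simp [RCLike.ofReal]

lemma aux_trace_vecMulVec {n : Type*} [Fintype n] (M : Matrix n n ℝ) (v : n → ℝ) :
    (M * Matrix.vecMulVec v v).trace = quadForm M v := by
  simp only [Matrix.trace, Matrix.diag_apply, Matrix.mul_apply, Matrix.vecMulVec_apply, quadForm]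
  apply Finset.sum_congr rfl; intro i _
  apply Finset.sum_congr rfl; intro j _
  ring

lemma aux_det_le_pow {n : Type*} [Fintype n] [DecidableEq n] [Nonempty n] {W : Matrix n n ℝ}
    (hW : W.PosDef) :
    W.det ≤ (W.trace / (Fintype.card n)) ^ (Fintype.card n) := by
  set d := Fintype.card n with hd
  have hd0 : 0 < d := Fintype.card_pos
  have hd0' : (0:ℝ) < d := by exact_mod_cast hd0
  set μ := hW.1.eigenvalues with hμ
  have hμpos : ∀ i, 0 < μ i := hW.eigenvalues_pos
  have hdet : W.det = ∏ i, μ i := by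
    rw [hW.1.det_eq_prod_eigenvalues]; push_cast; rfl
  have htr : W.trace = ∑ i, μ i := aux_trace_eq_sum_eig hW.1
  have hamgm : ∏ i, μ i ^ ((1:ℝ)/d) ≤ ∑ i, (1/d) * μ i := by
    apply Real.geom_mean_le_arith_mean_weighted
    · intro i _; positivity
    · rw [Finset.sum_const, Finset.card_univ, ← hd]; rw [nsmul_eq_mul, mul_one_div_cancel hd0'.ne']
    · intro i _; exact (hμpos i).le
  have hsum : ∑ i, (1/(d:ℝ)) * μ i = W.trace / d := by
    rw [htr, ← Finset.mul_sum]; ring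
  have hprod : (∏ i, μ i ^ ((1:ℝ)/d)) ^ d = ∏ i, μ i := by
    rw [← Finset.prod_pow]
    apply Finset.prod_congr rfl; intro i _
    rw [← Real.rpow_natCast (μ i ^ ((1:ℝ)/d)) d, ← Real.rpow_mul (hμpos i).le]
    rw [one_div, inv_mul_cancel₀ hd0'.ne', Real.rpow_one]
  rw [hdet, ← hprod]
  apply pow_le_pow_left₀ _ _ d
  · exact Finset.prod_nonneg fun i _ => Real.rpow_nonneg (hμpos i).le _
  · rw [← hsum]; exact hamgm

lemma aux_quadForm_nonneg {n : Type*} [Fintype n] {M : Matrix n n ℝ} (hM : M.PosSemidef)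
    (v : n → ℝ) : 0 ≤ quadForm M v := by
  have h := hM.dotProduct_mulVec_nonneg v
  have : star v ⬝ᵥ M *ᵥ v = quadForm M v := by
    simp only [dotProduct, Matrix.mulVec, dotProduct, Pi.star_apply, star_trivial,
      quadForm, Finset.mul_sum]
    apply Finset.sum_congr rfl; intro i _
    apply Finset.sum_congr rfl; intro j _
    ring
  rwa [this] at h


/-- generalized elliptical potential lemma.  For a doubly-indexed family of
unit-norm-bounded vectors `x_{t,k}` and `V_t = λ I + Σ_{s=1}^{t-1} Σ_{k=1}^K x_{s,k} x_{s,k}ᵀ`,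
`Σ_{t=1}^T min{1, Σ_k ‖x_{t,k}‖²_{V_t⁻¹}} ≤ 2 d log(1 + K T/(d λ))`. -/
theorem stmt_16 (d T K : ℕ) (x : ℕ → Fin K → EuclideanSpace ℝ (Fin d))
    (hx : ∀ t k, ‖x t k‖ ≤ 1)
    (lam : ℝ) (hlam : 0 < lam)
    (V : ℕ → Matrix (Fin d) (Fin d) ℝ)
    (hV : ∀ t, V t = lam • (1 : Matrix (Fin d) (Fin d) ℝ)
      + ∑ s ∈ Finset.Ico 1 t, ∑ k : Fin K, Matrix.of (fun i j => x s k i * x s k j)) :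
    ∑ t ∈ Finset.Icc 1 T,
        min 1 (∑ k : Fin K, quadForm ((V t)⁻¹) (fun i => x t k i))
      ≤ 2 * d * Real.log (1 + K * T / (d * lam)) := by
  classical
  rcases Nat.eq_zero_or_pos d with hd0 | hdpos
  · subst hd0
    have hz : ∀ t ∈ Finset.Icc 1 T,
        min 1 (∑ k : Fin K, quadForm ((V t)⁻¹) (fun i => x t k i)) = 0 := by
      intro t _
      have h0 : (∑ k : Fin K, quadForm ((V t)⁻¹) (fun i => x t k i)) = 0 :=
        Finset.sum_eq_zero fun k _ => by simp [quadForm]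
      rw [h0]
      simp
    rw [Finset.sum_congr rfl hz]
    simp
  have hdR : (0:ℝ) < d := by exact_mod_cast hdpos
  set A : ℕ → Matrix (Fin d) (Fin d) ℝ :=
    fun s => ∑ k : Fin K, Matrix.vecMulVec (fun i => x s k i) (fun i => x s k i) with hA
  have hofvv : ∀ s (k : Fin K), Matrix.of (fun i j => x s k i * x s k j)
      = Matrix.vecMulVec (fun i => x s k i) (fun i => x s k i) := fun s k => rfl
  have hVA : ∀ t, V t = lam • 1 + ∑ s ∈ Finset.Ico 1 t, A s := by
    intro t
    rw [hV t, hA]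
    simp only [hofvv]
  have hApsd : ∀ s, (A s).PosSemidef := by
    intro s
    rw [hA]
    exact Finset.sum_induction _ (fun M : Matrix (Fin d) (Fin d) ℝ => M.PosSemidef) (fun a b ha hb => ha.add hb)
      (Matrix.PosSemidef.zero) (fun k _ => aux_vecMulVec_psd _)
  have hVpd : ∀ t, (V t).PosDef := by
    intro t
    rw [hVA t]
    apply Matrix.PosDef.add_posSemidef
    · rw [Matrix.smul_one_eq_diagonal]
      exact Matrix.posDef_diagonal_iff.mpr fun i => hlam
    · exact Finset.sum_induction _ (fun M : Matrix (Fin d) (Fin d) ℝ => M.PosSemidef) (fun a b ha hb => ha.add hb)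
        (Matrix.PosSemidef.zero) (fun s _ => hApsd s)
  set u : ℕ → ℝ := fun t => ∑ k : Fin K, quadForm ((V t)⁻¹) (fun i => x t k i) with hu
  have hunn : ∀ t, 0 ≤ u t := by
    intro t
    apply Finset.sum_nonneg
    intro k _
    exact aux_quadForm_nonneg (hVpd t).inv.posSemidef _
  have hdetpos : ∀ t, 0 < (V t).det := fun t => (hVpd t).det_pos
  have hstep : ∀ t, 1 ≤ t → (V t).det * (1 + u t) ≤ (V (t+1)).det := by
    intro t ht
    have hnext : V (t+1) = V t + A t := by
      rw [hVA (t+1), hVA t, Finset.sum_Ico_succ_top ht, add_assoc]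
    have htr : ((V t)⁻¹ * A t).trace = u t := by
      rw [hA, Matrix.mul_sum, Matrix.trace_sum]
      simp only [aux_trace_vecMulVec]
      rfl
    have := aux_det_add_psd (hVpd t) (hApsd t)
    rw [htr] at this
    rw [hnext]
    exact this
  set g : ℕ → ℝ := fun t => Real.log ((V t).det) with hg
  have hlogstep : ∀ t, 1 ≤ t → Real.log (1 + u t) ≤ g (t+1) - g t := by
    intro t ht
    have h1 : 0 < 1 + u t := by have := hunn t; linarith
    have h2 := Real.log_le_log (mul_pos (hdetpos t) h1) (hstep t ht)
    rw [Real.log_mul (hdetpos t).ne' h1.ne'] at h2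
    simp only [hg] at *
    linarith
  have htel : ∑ t ∈ Finset.Icc 1 T, (g (t+1) - g t) = g (T+1) - g 1 := by
    rw [← Finset.Ico_add_one_right_eq_Icc, Finset.sum_Ico_eq_sum_range]
    show (∑ i ∈ Finset.range (T + 1 - 1), (g (1 + i + 1) - g (1 + i))) = _
    rw [Nat.add_sub_cancel]
    have h := Finset.sum_range_sub (fun i => g (i+1)) T
    calc ∑ i ∈ Finset.range T, (g (1 + i + 1) - g (1 + i))
        = ∑ i ∈ Finset.range T, (g (i + 1 + 1) - g (i + 1)) := by
          apply Finset.sum_congr rfl; intro i _; rw [add_comm 1 i]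
      _ = g (T+1) - g 1 := h
  have hsum1 : ∑ t ∈ Finset.Icc 1 T, min 1 (u t) ≤ 2 * (g (T+1) - g 1) := by
    calc ∑ t ∈ Finset.Icc 1 T, min 1 (u t)
        ≤ ∑ t ∈ Finset.Icc 1 T, 2 * Real.log (1 + u t) :=
          Finset.sum_le_sum fun t _ => aux_min_le_log (u t) (hunn t)
      _ ≤ ∑ t ∈ Finset.Icc 1 T, 2 * (g (t+1) - g t) := by
          apply Finset.sum_le_sum
          intro t ht
          have h1 : 1 ≤ t := (Finset.mem_Icc.mp ht).1
          have := hlogstep t h1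
          linarith
      _ = 2 * (g (T+1) - g 1) := by rw [← Finset.mul_sum, htel]
  have hV1 : V 1 = lam • 1 := by
    rw [hVA 1, Finset.Ico_self, Finset.sum_empty, add_zero]
  have hg1 : g 1 = d * Real.log lam := by
    simp only [hg, hV1, Matrix.det_smul, Matrix.det_one, mul_one]
    rw [Real.log_pow]
    simp [Fintype.card_fin]
  haveI : Nonempty (Fin d) := Fin.pos_iff_nonempty.mp hdpos
  have hxsq : ∀ s (k : Fin K), ∑ i, (x s k i)^2 ≤ 1 := by
    intro s k
    have h1 : ∑ i, (x s k i)^2 = ‖x s k‖^2 := by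
      rw [EuclideanSpace.norm_eq, Real.sq_sqrt (by positivity)]
      exact Finset.sum_congr rfl fun i _ => by rw [Real.norm_eq_abs, sq_abs]
    rw [h1]
    have h2 := hx s k
    nlinarith [norm_nonneg (x s k)]
  have htrA : ∀ s, (A s).trace ≤ (K:ℝ) := by
    intro s
    rw [hA, Matrix.trace_sum]
    have : ∀ k : Fin K, (Matrix.vecMulVec (fun i => x s k i) (fun i => x s k i)).trace ≤ 1 := by
      intro k
      have : (Matrix.vecMulVec (fun i => x s k i) (fun i => x s k i)).trace
          = ∑ i, (x s k i)^2 := by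
        simp [Matrix.trace, Matrix.vecMulVec_apply, sq]
      rw [this]
      exact hxsq s k
    calc ∑ k : Fin K, (Matrix.vecMulVec (fun i => x s k i) (fun i => x s k i)).trace
        ≤ ∑ _k : Fin K, (1:ℝ) := Finset.sum_le_sum fun k _ => this k
      _ = K := by simp
  have htrV : (V (T+1)).trace ≤ d * lam + K * T := by
    rw [hVA (T+1), Matrix.trace_add, Matrix.trace_smul, Matrix.trace_one, Matrix.trace_sum]
    have h1 : ∑ s ∈ Finset.Ico 1 (T+1), (A s).trace ≤ ∑ _s ∈ Finset.Ico 1 (T+1), (K:ℝ) :=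
      Finset.sum_le_sum fun s _ => htrA s
    have h2 : ∑ _s ∈ Finset.Ico 1 (T+1), (K:ℝ) = K * T := by
      rw [Finset.sum_const, Nat.card_Ico, Nat.add_sub_cancel, nsmul_eq_mul, mul_comm]
    rw [h2] at h1
    have h3 : lam • ((Fintype.card (Fin d) : ℝ)) = d * lam := by
      simp [Fintype.card_fin, smul_eq_mul, mul_comm]
    rw [h3]
    linarith
  have htrpos : 0 < (V (T+1)).trace := by
    rw [aux_trace_eq_sum_eig (hVpd (T+1)).1]
    exact Finset.sum_pos (fun i _ => (hVpd (T+1)).eigenvalues_pos i) Finset.univ_nonempty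
  have hdetle : (V (T+1)).det ≤ (lam + (K:ℝ) * T / d)^d := by
    have h1 := aux_det_le_pow (hVpd (T+1))
    rw [Fintype.card_fin] at h1
    refine h1.trans ?_
    apply pow_le_pow_left₀ (by positivity)
    rw [div_le_iff₀ hdR]
    have : (lam + (K:ℝ) * T / d) * d = d * lam + K * T := by field_simp
    rw [this]
    exact htrV
  have hgT : g (T+1) ≤ d * Real.log (lam + (K:ℝ) * T / d) := by
    have h := Real.log_le_log (hdetpos (T+1)) hdetle
    rw [Real.log_pow] at h
    exact h
  have hpos1 : (0:ℝ) < 1 + (K:ℝ) * T / (d * lam) := by positivity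
  have hlogsplit : Real.log (lam + (K:ℝ) * T / d)
      = Real.log lam + Real.log (1 + (K:ℝ) * T / (d * lam)) := by
    have h1 : lam + (K:ℝ) * T / d = lam * (1 + (K:ℝ) * T / (d * lam)) := by
      field_simp
    rw [h1, Real.log_mul hlam.ne' hpos1.ne']
  have hfinal : g (T+1) - g 1 ≤ d * Real.log (1 + (K:ℝ) * T / (d * lam)) := by
    rw [hg1]
    rw [hlogsplit, mul_add] at hgT
    linarith
  calc ∑ t ∈ Finset.Icc 1 T, min 1 (u t) ≤ 2 * (g (T+1) - g 1) := hsum1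
    _ ≤ 2 * (d * Real.log (1 + (K:ℝ) * T / (d * lam))) := by linarith
    _ = 2 * d * Real.log (1 + (K:ℝ) * T / (d * lam)) := by ring
end
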